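/- Fix a function A : {1,2} → ℝ and t ∈ ℝ, and define Qₙ(t) = Σ_{(j₀,...,jₙ)∈{1,2}^{n+1}} exp(t·(A(j₀)+...+A(jₙ)))·μ(j₀,...,jₙ). Then for all n ≥ 2, Q_{n+2}(t) = ((δ(t)² - α(t)²)/4)·Qₙ(t), where δ(t) = Σ_j e^{t A(j)} and α(t) = Σ_j β_j e^{t A(j)}. -/

import Mathlib

open Real

/-- β₁ = sin 2θ, β₂ = -sin 2θ (symbol 0 stands for "1", symbol 1 for "2"). -/
noncomputable def beta (θ : ℝ) : Fin 2 → ℝ := ![sin (2 * θ), -sin (2 * θ)]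

noncomputable def gamma (θ : ℝ) : ℝ := (1 - sin (2 * θ) ^ 2) / 4

/-- a(i,j) = 0 if i = j, 1 otherwise. -/
noncomputable def aCoef (i j : Fin 2) : ℝ := if i = j then 0 else 1

/-- b(i,j) = γ if i = j, -γ otherwise. -/
noncomputable def bCoef (θ : ℝ) (i j : Fin 2) : ℝ := if i = j then gamma θ else -gamma θ

/-- The cylinder measure μ on finite strings over {1,2}. -/
noncomputable def mu (θ : ℝ) : List (Fin 2) → ℝ
  | [] => 1
  | [_] => 1 / 2
  | [i, j] => (1 - beta θ i * beta θ j) / 4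
  | k0 :: k1 :: k2 :: rest =>
      aCoef k0 k1 * mu θ (k1 :: k2 :: rest) + bCoef θ k0 k1 * mu θ (k2 :: rest)
/-- Qₙ(t) = Σ_{(j₀,...,jₙ)} exp(t(A(j₀)+...+A(jₙ))) μ(j₀,...,jₙ). -/
noncomputable def Q (θ : ℝ) (A : Fin 2 → ℝ) (t : ℝ) (n : ℕ) : ℝ :=
  ∑ j : Fin (n + 1) → Fin 2,
    Real.exp (t * ∑ i, A (j i)) * mu θ (List.ofFn j)

lemma mu_cons_cons (θ : ℝ) (k0 k1 : Fin 2) (l : List (Fin 2)) (hl : l ≠ []) :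
    mu θ (k0 :: k1 :: l) = aCoef k0 k1 * mu θ (k1 :: l) + bCoef θ k0 k1 * mu θ l := by
  cases l with
  | nil => exact absurd rfl hl
  | cons a b => rfl

lemma sum_mu_cons (θ : ℝ) (l : List (Fin 2)) : ∑ i : Fin 2, mu θ (i :: l) = mu θ l := by
  match l with
  | [] => simp [mu, Fin.sum_univ_two]
  | [j] => simp [mu, beta, Fin.sum_univ_two]; fin_cases j <;> simp <;> ring
  | j :: k :: rest =>
    simp only [mu, Fin.sum_univ_two]
    fin_cases j <;> simp [aCoef, bCoef] <;> ring

lemma sum_split (A : Fin 2 → ℝ) (m : ℕ) (F : List (Fin 2) → ℝ → ℝ) :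
    ∑ j : Fin (m + 1) → Fin 2, F (List.ofFn j) (∑ i, A (j i)) =
      ∑ k : Fin 2, ∑ r : Fin m → Fin 2, F (k :: List.ofFn r) (A k + ∑ i, A (r i)) := by
  rw [← (Fin.consEquiv (fun _ : Fin (m + 1) => Fin 2)).sum_comp
      (fun j => F (List.ofFn j) (∑ i, A (j i))), Fintype.sum_prod_type]
  refine Finset.sum_congr rfl fun k _ => Finset.sum_congr rfl fun r _ => ?_
  simp [List.ofFn_succ, Fin.sum_univ_succ]

/-- The two-step recurrence Q_{n+2}(t) = ((δ(t)² - α(t)²)/4) Qₙ(t), where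
δ(t) = Σ_j e^{tA(j)} and α(t) = Σ_j β_j e^{tA(j)}. -/
theorem Q_recurrence (θ : ℝ) (hθ : θ ∈ Set.Ioo 0 (π / 2))
    (A : Fin 2 → ℝ) (t : ℝ) (n : ℕ) (hn : 2 ≤ n) :
    Q θ A t (n + 2) =
      (((∑ j : Fin 2, Real.exp (t * A j)) ^ 2
          - (∑ j : Fin 2, beta θ j * Real.exp (t * A j)) ^ 2) / 4) * Q θ A t n := by
  set C : ℝ := ((∑ j : Fin 2, Real.exp (t * A j)) ^ 2
      - (∑ j : Fin 2, beta θ j * Real.exp (t * A j)) ^ 2) / 4 with hC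
  have e0 : Q θ A t (n + 2) =
      ∑ k0 : Fin 2, ∑ r : Fin (n + 2) → Fin 2,
        Real.exp (t * (A k0 + ∑ i, A (r i))) * mu θ (k0 :: List.ofFn r) :=
    sum_split A (n + 2) (fun l s => Real.exp (t * s) * mu θ l)
  have e1 : ∀ k : Fin 2,
      (∑ r : Fin (n + 2) → Fin 2,
        Real.exp (t * (A k + ∑ i, A (r i))) * mu θ (k :: List.ofFn r)) =
      ∑ k1 : Fin 2, ∑ r : Fin (n + 1) → Fin 2,
        Real.exp (t * (A k + (A k1 + ∑ i, A (r i)))) * mu θ (k :: k1 :: List.ofFn r) :=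
    fun k => sum_split A (n + 1) (fun l s => Real.exp (t * (A k + s)) * mu θ (k :: l))
  have key : ∀ r : Fin (n + 1) → Fin 2,
      (∑ k0 : Fin 2, ∑ k1 : Fin 2,
        Real.exp (t * (A k0 + (A k1 + ∑ i, A (r i)))) * mu θ (k0 :: k1 :: List.ofFn r)) =
      C * (Real.exp (t * ∑ i, A (r i)) * mu θ (List.ofFn r)) := by
    intro r
    have hl : List.ofFn r ≠ [] := by
      intro h
      have := congrArg List.length h
      simp at this
    have hsum := sum_mu_cons θ (List.ofFn r)
    rw [Fin.sum_univ_two] at hsum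
    simp only [Fin.sum_univ_two, mu_cons_cons θ _ _ _ hl, hC]
    simp only [aCoef, bCoef, beta, gamma, Fin.isValue, Matrix.cons_val_zero,
      Matrix.cons_val_one, Matrix.head_cons, reduceIte, mul_add, Real.exp_add,
      if_neg (show ¬((0 : Fin 2) = 1) by decide), if_neg (show ¬((1 : Fin 2) = 0) by decide)]
    linear_combination (Real.exp (t * A 0) * Real.exp (t * A 1) *
      Real.exp (t * ∑ i, A (r i))) * hsum
  rw [e0]
  simp only [e1]
  have hQ : Q θ A t n = ∑ r : Fin (n + 1) → Fin 2,
      Real.exp (t * ∑ i, A (r i)) * mu θ (List.ofFn r) := rfl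
  rw [hQ, Finset.mul_sum]
  trans (∑ k0 : Fin 2, ∑ r : Fin (n + 1) → Fin 2, ∑ k1 : Fin 2,
      Real.exp (t * (A k0 + (A k1 + ∑ i, A (r i)))) * mu θ (k0 :: k1 :: List.ofFn r))
  · exact Finset.sum_congr rfl fun k0 _ => Finset.sum_comm
  rw [Finset.sum_comm]
  exact Finset.sum_congr rfl fun r _ => key r
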